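/- arXiv:cond-mat/0310735 — 4 statements merged into one kernel-verified Lean document; each statement's English description precedes it below -/
import Mathlib

section
/- Let β satisfy 1 < β < 3/2 and let f(x) = tanh(βx) − x. Let x₀ : ℝ → ℝ be a continuous 1-periodic function and let v : ℝ → ℝ be a differentiable 1-periodic function, not identically zero, satisfying v'(t) = f'(x₀(t))·v(t) for all t. Then ∫₀¹ f'''(x₀(s))·v(s)² ds < 0. -/
open Real

lemma tanh_hasDerivAt' (x : ℝ) : HasDerivAt Real.tanh (1 - Real.tanh x ^ 2) x := by
  have h : Real.tanh = fun y => Real.sinh y / Real.cosh y := funext Real.tanh_eq_sinh_div_cosh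
  have hc := (Real.cosh_pos x).ne'
  have hd := (Real.hasDerivAt_sinh x).div (Real.hasDerivAt_cosh x) hc
  rw [h]
  refine hd.congr_deriv ?_
  simp only
  have h1 := Real.cosh_sq_sub_sinh_sq x
  field_simp

lemma tanh_continuous' : Continuous Real.tanh :=
  Differentiable.continuous fun x => (tanh_hasDerivAt' x).differentiableAt

section
variable (β : ℝ)

lemma T_hasDerivAt (x : ℝ) :
    HasDerivAt (fun y => Real.tanh (β * y)) ((1 - Real.tanh (β * x) ^ 2) * β) x := by
  have h : HasDerivAt (fun y : ℝ => β * y) β x := by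
    simpa using (hasDerivAt_id x).const_mul β
  exact (tanh_hasDerivAt' (β * x)).comp x h

lemma g1_hasDerivAt (x : ℝ) :
    HasDerivAt (fun y => β * (1 - Real.tanh (β * y) ^ 2) - 1)
      (-2 * β ^ 2 * Real.tanh (β * x) * (1 - Real.tanh (β * x) ^ 2)) x := by
  have h1 := ((T_hasDerivAt β x).pow 2).const_mul β
  have h2 : HasDerivAt (fun y => β * (Real.tanh (β * y) ^ 2))
      (β * (2 * Real.tanh (β * x) ^ 1 * ((1 - Real.tanh (β * x) ^ 2) * β))) x := h1
  have h3 : HasDerivAt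
    (fun y => (β - β * Real.tanh (β * y) ^ 2) - 1) (0 - β * (2 * Real.tanh (β * x) ^ 1 * ((1 - Real.tanh (β * x) ^ 2) * β))) x := ((hasDerivAt_const x β).sub h2).sub_const 1
  have he : (fun y => (β - β * Real.tanh (β * y) ^ 2) - 1) = fun y => β * (1 - Real.tanh (β * y) ^ 2) - 1 := by
    funext y; ring
  rw [he] at h3
  convert h3 using 1
  ring

end

section
variable (β : ℝ)

lemma g2_hasDerivAt (x : ℝ) :
    HasDerivAt (fun y => -2 * β ^ 2 * Real.tanh (β * y) * (1 - Real.tanh (β * y) ^ 2))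
      (-2 * β ^ 3 * (1 - Real.tanh (β * x) ^ 2) * (1 - 3 * Real.tanh (β * x) ^ 2)) x := by
  have hT := T_hasDerivAt β x
  have h1 := hT.mul ((hasDerivAt_const x (1:ℝ)).sub (hT.pow 2))
  have h2 := h1.const_mul (-2 * β ^ 2)
  have he : (fun y => -2 * β ^ 2 * Real.tanh (β * y) * (1 - Real.tanh (β * y) ^ 2))
      = fun y => -2 * β ^ 2 * (Real.tanh (β * y) * (1 - Real.tanh (β * y) ^ 2)) := by
    funext y; ring
  rw [he]
  refine h2.congr_deriv ?_
  simp
  ring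

lemma iterated3 (f : ℝ → ℝ) (hf : ∀ x, f x = Real.tanh (β * x) - x) (x : ℝ) :
    iteratedDeriv 3 f x = -2 * β ^ 3 * (1 - Real.tanh (β * x) ^ 2) * (1 - 3 * Real.tanh (β * x) ^ 2) := by
  have hfe : f = fun y => Real.tanh (β * y) - y := funext hf
  have hd1 : deriv f = fun y => β * (1 - Real.tanh (β * y) ^ 2) - 1 := by
    funext y
    rw [hfe]
    have h : HasDerivAt (fun z => Real.tanh (β * z) - z)
        ((1 - Real.tanh (β * y) ^ 2) * β - 1) y := (T_hasDerivAt β y).sub (hasDerivAt_id y)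
    rw [h.deriv]; ring
  have hd2 : deriv (deriv f) = fun y => -2 * β ^ 2 * Real.tanh (β * y) * (1 - Real.tanh (β * y) ^ 2) := by
    funext y
    rw [hd1, (g1_hasDerivAt β y).deriv]
  have hd3 : deriv (deriv (deriv f)) x = -2 * β ^ 3 * (1 - Real.tanh (β * x) ^ 2) * (1 - 3 * Real.tanh (β * x) ^ 2) := by
    rw [hd2, (g2_hasDerivAt β x).deriv]
  rw [iteratedDeriv_succ, iteratedDeriv_succ, iteratedDeriv_one]
  exact hd3

end
theorem third_deriv_integral_neg_improved (β : ℝ) (hβ1 : 1 < β) (hβ2 : β < 3/2)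
    (f : ℝ → ℝ) (hf : ∀ x, f x = Real.tanh (β * x) - x)
    (x₀ : ℝ → ℝ) (hx₀ : Continuous x₀) (hx₀per : ∀ t, x₀ (t + 1) = x₀ t)
    (v : ℝ → ℝ) (hv : Differentiable ℝ v) (hvper : ∀ t, v (t + 1) = v t)
    (hvne : ¬ ∀ t, v t = 0)
    (hveq : ∀ t, deriv v t = deriv f (x₀ t) * v t) :
    (∫ s in (0:ℝ)..1, iteratedDeriv 3 f (x₀ s) * v s ^ 2) < 0 := by
  have hβ0 : (0:ℝ) < β := by linarith
  set a : ℝ → ℝ := fun s => β * (1 - Real.tanh (β * x₀ s) ^ 2) - 1 with ha_def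
  have hfe : f = fun y => Real.tanh (β * y) - y := funext hf
  have hd1 : deriv f = fun y => β * (1 - Real.tanh (β * y) ^ 2) - 1 := by
    funext y
    rw [hfe]
    have h : HasDerivAt (fun z => Real.tanh (β * z) - z)
        ((1 - Real.tanh (β * y) ^ 2) * β - 1) y := (T_hasDerivAt β y).sub (hasDerivAt_id y)
    rw [h.deriv]; ring
  have hTc : Continuous fun s => Real.tanh (β * x₀ s) :=
    tanh_continuous'.comp (continuous_const.mul hx₀)
  have ha : Continuous a :=
    (continuous_const.mul (continuous_const.sub (hTc.pow 2))).sub continuous_const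
  have hvC : Continuous v := hv.continuous
  have hveq' : ∀ t, deriv v t = a t * v t := by
    intro t; rw [hveq, hd1]
  have hvd : ∀ t, HasDerivAt v (a t * v t) t := by
    intro t
    have h := (hv t).hasDerivAt
    rwa [hveq' t] at h
  -- v never vanishes
  set F : ℝ → ℝ := fun t => ∫ u in (0:ℝ)..t, a u with hF_def
  have hF : ∀ t, HasDerivAt F (a t) t := fun t => (ha.integral_hasStrictDerivAt 0 t).hasDerivAt
  set w : ℝ → ℝ := fun t => v t * Real.exp (-F t) with hw_def
  have hw : ∀ t, HasDerivAt w 0 t := by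
    intro t
    have h := (hvd t).mul ((hF t).neg.exp)
    refine h.congr_deriv ?_
    simp
    ring
  have hwconst : ∀ s t, w s = w t :=
    is_const_of_deriv_eq_zero (fun t => (hw t).differentiableAt) (fun t => (hw t).deriv)
  have hF0 : F 0 = 0 := intervalIntegral.integral_same
  have hkey : ∀ t, v t * Real.exp (-F t) = v 0 := by
    intro t
    have h := hwconst t 0
    simpa [hw_def, hF0] using h
  have hv0 : v 0 ≠ 0 := by
    intro h0
    apply hvne
    intro t
    have h := hkey t
    rw [h0] at h
    rcases mul_eq_zero.1 h with h' | h'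
    · exact h'
    · exact absurd h' (Real.exp_ne_zero _)
  have hvt : ∀ t, v t ≠ 0 := by
    intro t ht
    apply hv0
    rw [← hkey t, ht, zero_mul]
  -- positivity of ∫ v²
  have hI₀ : 0 < ∫ s in (0:ℝ)..1, v s ^ 2 := by
    apply intervalIntegral.intervalIntegral_pos_of_pos_on
      ((hvC.pow 2).intervalIntegrable 0 1)
    · intro x _
      exact lt_of_le_of_ne (sq_nonneg _) (Ne.symm (pow_ne_zero 2 (hvt x)))
    · exact zero_lt_one
  -- ∫ a v² = 0
  have hv2d : ∀ t, HasDerivAt (fun s => v s ^ 2) (2 * a t * v t ^ 2) t := by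
    intro t
    have h := (hvd t).pow 2
    refine h.congr_deriv ?_
    simp
    ring
  have hcont2 : Continuous fun s => 2 * a s * v s ^ 2 :=
    (continuous_const.mul ha).mul (hvC.pow 2)
  have hI₁' : (∫ s in (0:ℝ)..1, 2 * a s * v s ^ 2) = v 1 ^ 2 - v 0 ^ 2 :=
    intervalIntegral.integral_eq_sub_of_hasDerivAt (fun t _ => hv2d t)
      (hcont2.intervalIntegrable 0 1)
  have hv10 : v 1 = v 0 := by simpa using hvper 0
  have hI₁ : (∫ s in (0:ℝ)..1, a s * v s ^ 2) = 0 := by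
    have h2 : (∫ s in (0:ℝ)..1, 2 * (a s * v s ^ 2))
        = 2 * ∫ s in (0:ℝ)..1, a s * v s ^ 2 := intervalIntegral.integral_const_mul 2 _
    have h3 : (∫ s in (0:ℝ)..1, 2 * a s * v s ^ 2)
        = ∫ s in (0:ℝ)..1, 2 * (a s * v s ^ 2) := by
      congr 1; funext s; ring
    rw [h3, h2, hv10] at hI₁'
    linarith
  -- rewrite integrand
  have hrw : (∫ s in (0:ℝ)..1, iteratedDeriv 3 f (x₀ s) * v s ^ 2)
      = ∫ s in (0:ℝ)..1,
        (-2 * β ^ 3 * (1 - Real.tanh (β * x₀ s) ^ 2) * (1 - 3 * Real.tanh (β * x₀ s) ^ 2)) * v s ^ 2 := by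
    congr 1; funext s; rw [iterated3 β f hf]
  rw [hrw]
  set G : ℝ → ℝ := fun s => 2 * β * (2 * β - 3) * v s ^ 2 + 4 * β * (β - 3) * (a s * v s ^ 2)
    with hG_def
  have hGc : Continuous G :=
    (continuous_const.mul (hvC.pow 2)).add (continuous_const.mul (ha.mul (hvC.pow 2)))
  have hIc : Continuous fun s =>
      (-2 * β ^ 3 * (1 - Real.tanh (β * x₀ s) ^ 2) * (1 - 3 * Real.tanh (β * x₀ s) ^ 2)) * v s ^ 2 :=
    (((continuous_const.mul (continuous_const.sub (hTc.pow 2))).mul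
      (continuous_const.sub (continuous_const.mul (hTc.pow 2))))).mul (hvC.pow 2)
  have hmono : (∫ s in (0:ℝ)..1,
      (-2 * β ^ 3 * (1 - Real.tanh (β * x₀ s) ^ 2) * (1 - 3 * Real.tanh (β * x₀ s) ^ 2)) * v s ^ 2)
      ≤ ∫ s in (0:ℝ)..1, G s := by
    apply intervalIntegral.integral_mono_on zero_le_one
      (hIc.intervalIntegrable 0 1) (hGc.intervalIntegrable 0 1)
    intro s _
    simp only [hG_def, ha_def]
    nlinarith [mul_nonneg (mul_nonneg (by linarith : (0:ℝ) ≤ 6 * β)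
        (sq_nonneg (β * Real.tanh (β * x₀ s) ^ 2 - β + 1))) (sq_nonneg (v s)),
      sq_nonneg (v s), sq_nonneg (Real.tanh (β * x₀ s))]
  have hGval : (∫ s in (0:ℝ)..1, G s) = 2 * β * (2 * β - 3) * ∫ s in (0:ℝ)..1, v s ^ 2 := by
    simp only [hG_def]
    rw [intervalIntegral.integral_add (f := fun s => 2 * β * (2 * β - 3) * v s ^ 2) (g := fun s => 4 * β * (β - 3) * (a s * v s ^ 2))
        ((continuous_const.mul (hvC.pow 2)).intervalIntegrable 0 1)
        ((continuous_const.mul (ha.mul (hvC.pow 2))).intervalIntegrable 0 1),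
      intervalIntegral.integral_const_mul, intervalIntegral.integral_const_mul, hI₁]
    ring
  have hneg : (∫ s in (0:ℝ)..1, G s) < 0 := by
    rw [hGval]
    apply mul_neg_of_neg_of_pos _ hI₀
    nlinarith
  linarith
end

section
/- Let ε > 0 and h ≥ 0, and define x(t) = 1 + h·(cos(2πt) + 2πε·sin(2πt))/(1 + 4π²ε²). Then x is a 1-periodic solution of the equation ε·x'(t) = 1 − x(t) + h·cos(2πt), its minimum value over ℝ equals 1 − h/√(1 + 4π²ε²), and consequently x(t) > 0 for all t if and only if h < h_ca, where h_ca = √(1 + 4π²ε²); at h = h_ca the solution attains the value 0. -/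
open Real

theorem asymmetric_solution_touches_zero (ε h : ℝ) (hε : 0 < ε) (hh : 0 ≤ h)
    (x : ℝ → ℝ)
    (hx : ∀ t, x t = 1 + h * (Real.cos (2 * Real.pi * t) +
      2 * Real.pi * ε * Real.sin (2 * Real.pi * t)) / (1 + 4 * Real.pi ^ 2 * ε ^ 2)) :
    Differentiable ℝ x ∧
    (∀ t, ε * deriv x t = 1 - x t + h * Real.cos (2 * Real.pi * t)) ∧
    (∀ t, x (t + 1) = x t) ∧
    IsLeast (Set.range x) (1 - h / Real.sqrt (1 + 4 * Real.pi ^ 2 * ε ^ 2)) ∧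
    ((∀ t, 0 < x t) ↔ h < Real.sqrt (1 + 4 * Real.pi ^ 2 * ε ^ 2)) ∧
    (h = Real.sqrt (1 + 4 * Real.pi ^ 2 * ε ^ 2) → ∃ t, x t = 0) := by
  have hπ := Real.pi_pos
  have hDpos : (0:ℝ) < 1 + 4 * Real.pi ^ 2 * ε ^ 2 := by positivity
  have hDne : (1 + 4 * Real.pi ^ 2 * ε ^ 2) ≠ 0 := ne_of_gt hDpos
  set s := Real.sqrt (1 + 4 * Real.pi ^ 2 * ε ^ 2) with hsdef
  have hs2 : s ^ 2 = 1 + 4 * Real.pi ^ 2 * ε ^ 2 := Real.sq_sqrt hDpos.le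
  have hspos : 0 < s := Real.sqrt_pos.mpr hDpos
  have hxfun : x = fun t => 1 + h * (Real.cos (2 * Real.pi * t) +
      2 * Real.pi * ε * Real.sin (2 * Real.pi * t)) / (1 + 4 * Real.pi ^ 2 * ε ^ 2) :=
    funext hx
  -- derivative
  have hderiv : ∀ t, HasDerivAt x
      (h * (-Real.sin (2 * Real.pi * t) * (2 * Real.pi) +
        2 * Real.pi * ε * (Real.cos (2 * Real.pi * t) * (2 * Real.pi))) /
        (1 + 4 * Real.pi ^ 2 * ε ^ 2)) t := by
    intro t
    rw [hxfun]
    have h1 : HasDerivAt (fun t : ℝ => 2 * Real.pi * t) (2 * Real.pi) t := by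
      simpa using (hasDerivAt_id t).const_mul (2 * Real.pi)
    have hc : HasDerivAt (fun t : ℝ => Real.cos (2 * Real.pi * t))
        (-Real.sin (2 * Real.pi * t) * (2 * Real.pi)) t :=
      (Real.hasDerivAt_cos _).comp t h1
    have hsn : HasDerivAt (fun t : ℝ => Real.sin (2 * Real.pi * t))
        (Real.cos (2 * Real.pi * t) * (2 * Real.pi)) t :=
      (Real.hasDerivAt_sin _).comp t h1
    exact (((hc.add (hsn.const_mul (2 * Real.pi * ε))).const_mul h).div_const _).const_add 1
  have hdiff : Differentiable ℝ x := fun t => (hderiv t).differentiableAt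
  -- lower bound on the oscillating part
  have hA : ∀ t, -s ≤ Real.cos (2 * Real.pi * t) + 2 * Real.pi * ε * Real.sin (2 * Real.pi * t) := by
    intro t
    set θ := 2 * Real.pi * t
    have h1 : (Real.cos θ + 2 * Real.pi * ε * Real.sin θ) ^ 2 ≤ 1 + 4 * Real.pi ^ 2 * ε ^ 2 := by
      nlinarith [sq_nonneg (2 * Real.pi * ε * Real.cos θ - Real.sin θ),
        Real.sin_sq_add_cos_sq θ]
    nlinarith [hs2, hspos, sq_nonneg (Real.cos θ + 2 * Real.pi * ε * Real.sin θ + s)]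
  -- the minimizing point
  set t0 : ℝ := (Real.pi + Real.arctan (2 * Real.pi * ε)) / (2 * Real.pi) with ht0
  have hθ0 : 2 * Real.pi * t0 = Real.pi + Real.arctan (2 * Real.pi * ε) := by
    rw [ht0]; field_simp
  have hsqeq : Real.sqrt (1 + (2 * Real.pi * ε) ^ 2) = s := by
    rw [hsdef]; ring_nf
  have hxt0 : x t0 = 1 - h / s := by
    have key : Real.cos (2 * Real.pi * t0) + 2 * Real.pi * ε * Real.sin (2 * Real.pi * t0) = -s := by
      rw [hθ0, Real.cos_add, Real.sin_add, Real.cos_pi, Real.sin_pi,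
        Real.cos_arctan, Real.sin_arctan, hsqeq]
      field_simp
      nlinarith [hs2]
    rw [hx, key]
    rw [show (1:ℝ) + 4 * Real.pi ^ 2 * ε ^ 2 = s ^ 2 from hs2.symm]
    field_simp
    ring
  have hlb : ∀ t, 1 - h / s ≤ x t := by
    intro t
    rw [hx]
    have h1 : -s * h ≤ h * (Real.cos (2 * Real.pi * t) + 2 * Real.pi * ε * Real.sin (2 * Real.pi * t)) := by
      calc -s * h = h * (-s) := by ring
      _ ≤ _ := mul_le_mul_of_nonneg_left (hA t) hh
    have h2 : -(h / s) ≤ h * (Real.cos (2 * Real.pi * t) + 2 * Real.pi * ε * Real.sin (2 * Real.pi * t)) / (1 + 4 * Real.pi ^ 2 * ε ^ 2) := by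
      rw [le_div_iff₀ hDpos]
      have : -(h / s) * (1 + 4 * Real.pi ^ 2 * ε ^ 2) = -s * h := by
        rw [← hs2]; field_simp
      rw [this]; exact h1
    linarith
  refine ⟨hdiff, ?_, ?_, ⟨⟨t0, hxt0⟩, ?_⟩, ?_, ?_⟩
  · intro t
    rw [(hderiv t).deriv, hx]
    field_simp
    ring
  · intro t
    rw [hx, hx]
    have h1 : 2 * Real.pi * (t + 1) = 2 * Real.pi * t + 2 * Real.pi := by ring
    rw [h1, Real.cos_add_two_pi, Real.sin_add_two_pi]
  · rintro y ⟨t, rfl⟩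
    exact hlb t
  · constructor
    · intro hpos
      have := hpos t0
      rw [hxt0] at this
      have : h / s < 1 := by linarith
      exact (div_lt_one hspos).mp this
    · intro hlt t
      have : h / s < 1 := (div_lt_one hspos).mpr hlt
      have := hlb t
      linarith
  · intro heq
    exact ⟨t0, by rw [hxt0, heq, div_self (ne_of_gt hspos)]; ring⟩
end

section
/- Let ε > 0, put z = exp(−1/(2ε)), and define h_cs = √((1 + 4π²ε²)·(π²ε² − 2π²ε²·z + (1 + π²ε²)·z²))/(πε·(1+z)). Assume h_cs ≥ 1. Then there exist t₀ ∈ ℝ and a differentiable function x : ℝ → ℝ satisfying ε·x'(t) = 1 − x(t) + h_cs·cos(2πt) for all t, such that h_cs·cos(2πt₀) = 1, h_cs·sin(2πt₀) = √(h_cs² − 1), x(t₀) = 0 and x(t₀ + 1/2) = 0; equivalently, h = h_cs solves the equation exp(−1/(2ε))·(2 + 4π²ε² + 2πε·√(h² − 1)) − 4π²ε² + 2πε·√(h² − 1) = 0. -/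
open Real

theorem hcs_connecting_solution (ε : ℝ) (hε : 0 < ε)
    (z : ℝ) (hz : z = Real.exp (-1 / (2 * ε)))
    (hcs : ℝ)
    (hhcs : hcs = Real.sqrt ((1 + 4 * Real.pi ^ 2 * ε ^ 2) *
        (Real.pi ^ 2 * ε ^ 2 - 2 * Real.pi ^ 2 * ε ^ 2 * z +
          (1 + Real.pi ^ 2 * ε ^ 2) * z ^ 2)) / (Real.pi * ε * (1 + z)))
    (hcs_ge : 1 ≤ hcs) :
    (∃ (t₀ : ℝ) (x : ℝ → ℝ), Differentiable ℝ x ∧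
      (∀ t, ε * deriv x t = 1 - x t + hcs * Real.cos (2 * Real.pi * t)) ∧
      hcs * Real.cos (2 * Real.pi * t₀) = 1 ∧
      hcs * Real.sin (2 * Real.pi * t₀) = Real.sqrt (hcs ^ 2 - 1) ∧
      x t₀ = 0 ∧ x (t₀ + 1/2) = 0) ∧
    Real.exp (-1 / (2 * ε)) * (2 + 4 * Real.pi ^ 2 * ε ^ 2 +
        2 * Real.pi * ε * Real.sqrt (hcs ^ 2 - 1)) -
      4 * Real.pi ^ 2 * ε ^ 2 + 2 * Real.pi * ε * Real.sqrt (hcs ^ 2 - 1) = 0 := by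
  have hπ : 0 < Real.pi := Real.pi_pos
  have hπ3 : (3:ℝ) ≤ Real.pi := by linarith [Real.pi_gt_three]
  have hzpos : 0 < z := hz ▸ Real.exp_pos _
  have h1z : (0:ℝ) < 1 + z := by linarith
  have hεne : ε ≠ 0 := ne_of_gt hε
  -- key inequality : z * (1 + 2 (πε)^2) ≤ 2 (πε)^2
  have hkey : z * (1 + 2 * (Real.pi * ε) ^ 2) ≤ 2 * (Real.pi * ε) ^ 2 := by
    set v : ℝ := 1 / (4 * ε) with hv
    have hvpos : 0 < v := by positivity
    have h1 : v + 1 ≤ Real.exp v := Real.add_one_le_exp v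
    have h2 : (1 + v) ^ 2 ≤ Real.exp (1 / (2 * ε)) := by
      have hE : Real.exp (1 / (2 * ε)) = Real.exp v * Real.exp v := by
        rw [← Real.exp_add]
        congr 1
        rw [hv]; field_simp; ring
      rw [hE]
      nlinarith [Real.exp_pos v]
    have hcv : (Real.pi * ε) ^ 2 * v ^ 2 = Real.pi ^ 2 / 16 := by
      rw [hv]; field_simp; ring
    have h3 : 1 + 2 * (Real.pi * ε) ^ 2 ≤ 2 * (Real.pi * ε) ^ 2 * Real.exp (1 / (2 * ε)) := by
      nlinarith [sq_nonneg (Real.pi * ε), mul_pos (mul_pos hπ hε) hvpos,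
        sq_nonneg Real.pi]
    have hzE : z * Real.exp (1 / (2 * ε)) = 1 := by
      rw [hz, ← Real.exp_add]
      rw [show -1 / (2 * ε) + 1 / (2 * ε) = 0 by ring, Real.exp_zero]
    calc z * (1 + 2 * (Real.pi * ε) ^ 2)
        ≤ z * (2 * (Real.pi * ε) ^ 2 * Real.exp (1 / (2 * ε))) := by
          exact mul_le_mul_of_nonneg_left h3 hzpos.le
      _ = 2 * (Real.pi * ε) ^ 2 * (z * Real.exp (1 / (2 * ε))) := by ring
      _ = 2 * (Real.pi * ε) ^ 2 := by rw [hzE]; ring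
  set S : ℝ := (2 * (Real.pi * ε) ^ 2 - z * (1 + 2 * (Real.pi * ε) ^ 2)) /
      (Real.pi * ε * (1 + z)) with hS
  have hden : (0:ℝ) < Real.pi * ε * (1 + z) := by positivity
  have hSnonneg : 0 ≤ S := div_nonneg (by linarith) hden.le
  have hSmul : S * (Real.pi * ε * (1 + z)) =
      2 * (Real.pi * ε) ^ 2 - z * (1 + 2 * (Real.pi * ε) ^ 2) :=
    div_mul_cancel₀ _ hden.ne'
  -- hcs^2 = 1 + S^2
  have hA : (1 + 4 * Real.pi ^ 2 * ε ^ 2) *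
      (Real.pi ^ 2 * ε ^ 2 - 2 * Real.pi ^ 2 * ε ^ 2 * z +
        (1 + Real.pi ^ 2 * ε ^ 2) * z ^ 2) =
      (Real.pi * ε * (1 + z)) ^ 2 +
        (2 * (Real.pi * ε) ^ 2 - z * (1 + 2 * (Real.pi * ε) ^ 2)) ^ 2 := by
    ring
  have hAnn : 0 ≤ (1 + 4 * Real.pi ^ 2 * ε ^ 2) *
      (Real.pi ^ 2 * ε ^ 2 - 2 * Real.pi ^ 2 * ε ^ 2 * z +
        (1 + Real.pi ^ 2 * ε ^ 2) * z ^ 2) := by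
    rw [hA]; positivity
  have hhsq : hcs ^ 2 = 1 + S ^ 2 := by
    rw [hhcs, div_pow, Real.sq_sqrt hAnn, hA, hS]
    field_simp
  have hsqrt : Real.sqrt (hcs ^ 2 - 1) = S := by
    rw [show hcs ^ 2 - 1 = S ^ 2 by linarith, Real.sqrt_sq hSnonneg]
  -- the final algebraic equation
  have hfin : z * (2 + 4 * Real.pi ^ 2 * ε ^ 2 + 2 * Real.pi * ε * S) -
      4 * Real.pi ^ 2 * ε ^ 2 + 2 * Real.pi * ε * S = 0 := by
    linear_combination 2 * hSmul
  have hhpos : 0 < hcs := lt_of_lt_of_le one_pos hcs_ge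
  have hhne : hcs ≠ 0 := ne_of_gt hhpos
  -- choice of t₀
  set t₀ : ℝ := Real.arccos (1 / hcs) / (2 * Real.pi) with ht₀
  have harg : 2 * Real.pi * t₀ = Real.arccos (1 / hcs) := by
    rw [ht₀]; field_simp
  have hm1 : (-1:ℝ) ≤ 1 / hcs := by
    have : (0:ℝ) ≤ 1 / hcs := by positivity
    linarith
  have h1le : 1 / hcs ≤ 1 := by rw [div_le_one hhpos]; exact hcs_ge
  have hcosv : Real.cos (2 * Real.pi * t₀) = 1 / hcs := by
    rw [harg, Real.cos_arccos hm1 h1le]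
  have hsinv : Real.sin (2 * Real.pi * t₀) = S / hcs := by
    rw [harg, Real.sin_arccos]
    rw [show 1 - (1 / hcs) ^ 2 = (S / hcs) ^ 2 by field_simp; linarith [hhsq]]
    exact Real.sqrt_sq (by positivity)
  have hcos1 : hcs * Real.cos (2 * Real.pi * t₀) = 1 := by
    rw [hcosv]; field_simp
  have hsin1 : hcs * Real.sin (2 * Real.pi * t₀) = Real.sqrt (hcs ^ 2 - 1) := by
    rw [hsinv, hsqrt]; field_simp
  -- the solution
  have h4c : (0:ℝ) < 1 + 4 * (Real.pi * ε) ^ 2 := by positivity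
  set D : ℝ := -(1 + (1 + 2 * Real.pi * ε * S) / (1 + 4 * (Real.pi * ε) ^ 2)) with hD
  set x : ℝ → ℝ := fun t => 1 +
      (hcs * Real.cos (2 * Real.pi * t) + 2 * Real.pi * ε * hcs * Real.sin (2 * Real.pi * t)) /
        (1 + 4 * (Real.pi * ε) ^ 2) +
      D * Real.exp (-(t - t₀) / ε) with hxdef
  have hdiff : Differentiable ℝ x := by
    rw [hxdef]; fun_prop
  have hderiv : ∀ t, HasDerivAt x
      ((hcs * (-Real.sin (2 * Real.pi * t)) * (2 * Real.pi) +
        2 * Real.pi * ε * hcs * (Real.cos (2 * Real.pi * t) * (2 * Real.pi))) /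
          (1 + 4 * (Real.pi * ε) ^ 2) +
        D * (Real.exp (-(t - t₀) / ε) * (-1 / ε))) t := by
    intro t
    have hlin : HasDerivAt (fun t : ℝ => 2 * Real.pi * t) (2 * Real.pi) t := by
      simpa using (hasDerivAt_id t).const_mul (2 * Real.pi)
    have hc : HasDerivAt (fun t : ℝ => Real.cos (2 * Real.pi * t))
        (-Real.sin (2 * Real.pi * t) * (2 * Real.pi)) t :=
      (Real.hasDerivAt_cos (2 * Real.pi * t)).comp t hlin
    have hs : HasDerivAt (fun t : ℝ => Real.sin (2 * Real.pi * t))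
        (Real.cos (2 * Real.pi * t) * (2 * Real.pi)) t :=
      (Real.hasDerivAt_sin (2 * Real.pi * t)).comp t hlin
    have he0 : HasDerivAt (fun t : ℝ => -(t - t₀) / ε) (-1 / ε) t := by
      have := (((hasDerivAt_id t).sub_const t₀).neg).div_const ε
      simpa using this
    have he : HasDerivAt (fun t : ℝ => Real.exp (-(t - t₀) / ε))
        (Real.exp (-(t - t₀) / ε) * (-1 / ε)) t :=
      he0.exp
    have := ((((hc.const_mul hcs).add (hs.const_mul (2 * Real.pi * ε * hcs))).div_const
        (1 + 4 * (Real.pi * ε) ^ 2)).const_add 1).add (he.const_mul D)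
    refine this.congr_deriv ?_
    ring
  refine ⟨⟨t₀, x, hdiff, ?_, hcos1, hsin1, ?_, ?_⟩, ?_⟩
  · intro t
    rw [(hderiv t).deriv, hxdef]
    simp only
    field_simp
    ring
  · rw [hxdef]
    simp only [sub_self, neg_zero, zero_div, Real.exp_zero, mul_one]
    rw [hcosv, hsinv, hD]
    field_simp
    ring
  · rw [hxdef]
    simp only
    have e1 : 2 * Real.pi * (t₀ + 1 / 2) = 2 * Real.pi * t₀ + Real.pi := by ring
    have e2 : -(t₀ + 1 / 2 - t₀) / ε = -1 / (2 * ε) := by ring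
    rw [e1, e2, Real.cos_add_pi, Real.sin_add_pi, ← hz, hcosv, hsinv, hD]
    have : (1 + 4 * (Real.pi * ε) ^ 2) ≠ 0 := h4c.ne'
    clear_value D S
    field_simp
    linear_combination (-1) * hfin
  · rw [← hz, hsqrt]
    exact hfin
end

section
/- Let ε > 0, put z = exp(−1/(2ε)), h_ca = √(1 + 4π²ε²) and h_cs = √((1 + 4π²ε²)·(π²ε² − 2π²ε²·z + (1 + π²ε²)·z²))/(πε·(1+z)). If exp(−1/(2ε)) < 4π²ε² (which holds for all sufficiently small ε > 0), then h_cs < h_ca. Moreover there exists ε₀ > 0 such that h_cs(ε) < h_ca(ε) for all 0 < ε < ε₀. -/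
open Real

/-- The critical amplitude at which the asymmetric solutions disappear. -/
noncomputable def hca (ε : ℝ) : ℝ := Real.sqrt (1 + 4 * Real.pi ^ 2 * ε ^ 2)

/-- The critical amplitude at which the symmetric solution bifurcates. -/
noncomputable def hcs (ε : ℝ) : ℝ :=
  Real.sqrt ((1 + 4 * Real.pi ^ 2 * ε ^ 2) *
      (Real.pi ^ 2 * ε ^ 2 - 2 * Real.pi ^ 2 * ε ^ 2 * Real.exp (-1 / (2 * ε)) +
        (1 + Real.pi ^ 2 * ε ^ 2) * Real.exp (-1 / (2 * ε)) ^ 2)) /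
    (Real.pi * ε * (1 + Real.exp (-1 / (2 * ε))))

lemma exp_small (ε : ℝ) (hε : 0 < ε) :
    Real.exp (-1 / (2 * ε)) < 4 * Real.pi ^ 2 * ε ^ 2 := by
  have e1 : 1 / (4 * ε) + 1 < Real.exp (1 / (4 * ε)) :=
    Real.add_one_lt_exp (ne_of_gt (by positivity : (0:ℝ) < 1 / (4 * ε)))
  have e3 : Real.exp (1 / (4 * ε)) * Real.exp (1 / (4 * ε)) = Real.exp (1 / (2 * ε)) := by
    rw [← Real.exp_add]; ring_nf
  have hbound : 1 / (16 * ε ^ 2) < Real.exp (1 / (2 * ε)) := by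
    rw [← e3]
    have h4 : (0:ℝ) < 1 / (4 * ε) := by positivity
    have : (1 / (4 * ε)) ^ 2 < Real.exp (1 / (4 * ε)) * Real.exp (1 / (4 * ε)) := by
      nlinarith
    calc 1 / (16 * ε ^ 2) = (1 / (4 * ε)) ^ 2 := by field_simp; ring
      _ < _ := this
  have hneg : Real.exp (-1 / (2 * ε)) = (Real.exp (1 / (2 * ε)))⁻¹ := by
    rw [← Real.exp_neg]; ring_nf
  have hpos : 0 < Real.exp (1 / (2 * ε)) := Real.exp_pos _
  have h16 : Real.exp (-1 / (2 * ε)) < 16 * ε ^ 2 := by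
    rw [hneg]
    have h16e : (0:ℝ) < 16 * ε ^ 2 := by positivity
    have h1 : 1 < Real.exp (1 / (2 * ε)) * (16 * ε ^ 2) := (div_lt_iff₀ h16e).mp hbound
    rw [inv_lt_iff_one_lt_mul₀ hpos]
    linarith
  have hpi : (3:ℝ) < Real.pi := Real.pi_gt_three
  nlinarith [sq_nonneg (Real.pi - 3), mul_pos hε hε]

lemma key (ε : ℝ) (hε : 0 < ε)
    (hz : Real.exp (-1 / (2 * ε)) < 4 * Real.pi ^ 2 * ε ^ 2) : hcs ε < hca ε := by
  set z := Real.exp (-1 / (2 * ε)) with hzdef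
  have hz0 : 0 < z := Real.exp_pos _
  have hπ : 0 < Real.pi := Real.pi_pos
  have hD : 0 < Real.pi * ε * (1 + z) := by positivity
  have hA : 0 < 1 + 4 * Real.pi ^ 2 * ε ^ 2 := by positivity
  have hBnn : 0 ≤ Real.pi ^ 2 * ε ^ 2 - 2 * Real.pi ^ 2 * ε ^ 2 * z +
      (1 + Real.pi ^ 2 * ε ^ 2) * z ^ 2 := by nlinarith [sq_nonneg (Real.pi * ε * (1 - z)), sq_nonneg z]
  have hBlt : (1 + 4 * Real.pi ^ 2 * ε ^ 2) *
      (Real.pi ^ 2 * ε ^ 2 - 2 * Real.pi ^ 2 * ε ^ 2 * z + (1 + Real.pi ^ 2 * ε ^ 2) * z ^ 2) <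
      (1 + 4 * Real.pi ^ 2 * ε ^ 2) * (Real.pi * ε * (1 + z)) ^ 2 := by
    have : Real.pi ^ 2 * ε ^ 2 - 2 * Real.pi ^ 2 * ε ^ 2 * z + (1 + Real.pi ^ 2 * ε ^ 2) * z ^ 2 <
        (Real.pi * ε * (1 + z)) ^ 2 := by nlinarith
    exact mul_lt_mul_of_pos_left this hA
  rw [hcs, hca, div_lt_iff₀ hD]
  calc Real.sqrt ((1 + 4 * Real.pi ^ 2 * ε ^ 2) *
      (Real.pi ^ 2 * ε ^ 2 - 2 * Real.pi ^ 2 * ε ^ 2 * z + (1 + Real.pi ^ 2 * ε ^ 2) * z ^ 2))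
      < Real.sqrt ((1 + 4 * Real.pi ^ 2 * ε ^ 2) * (Real.pi * ε * (1 + z)) ^ 2) :=
        Real.sqrt_lt_sqrt (by positivity) hBlt
    _ = Real.sqrt (1 + 4 * Real.pi ^ 2 * ε ^ 2) * (Real.pi * ε * (1 + z)) := by
        rw [Real.sqrt_mul hA.le, Real.sqrt_sq hD.le]

theorem hcs_lt_hca :
    (∀ ε : ℝ, 0 < ε → Real.exp (-1 / (2 * ε)) < 4 * Real.pi ^ 2 * ε ^ 2 →
      hcs ε < hca ε) ∧
    ∃ ε₀ > (0:ℝ), ∀ ε : ℝ, 0 < ε → ε < ε₀ → hcs ε < hca ε := by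
  refine ⟨fun ε hε hz => key ε hε hz, 1, one_pos, fun ε hε _ => key ε hε (exp_small ε hε)⟩
end
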